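/- Let G be a 2-connected graph and u a vertex not in G with at least three neighbors x, y, z in G. Then the graph G' obtained by adding u and the edges (u,x),(u,y),(u,z) to G contains K_4 as a minor. -/

import Mathlib

/-- `G` contains `K₄` as a minor. -/
def HasK4Minor {V : Type} (G : SimpleGraph V) : Prop :=
  ∃ B : Fin 4 → Set V,
    (∀ i, (G.induce (B i)).Connected) ∧
    (∀ i j, i ≠ j → Disjoint (B i) (B j)) ∧
    (∀ i j, i ≠ j → ∃ a ∈ B i, ∃ b ∈ B j, G.Adj a b)

/-- `G` is 2-connected: connected, at least 3 vertices, and no cut vertex. -/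
def TwoConnected {V : Type} (G : SimpleGraph V) : Prop :=
  G.Connected ∧ 3 ≤ Nat.card V ∧ ∀ v : V, (G.induce ({v}ᶜ : Set V)).Connected

/-- The graph obtained from `G` by adding a new vertex (`none`) adjacent to the three
vertices `x`, `y`, `z` of `G`. -/
def addApexVertex {V : Type} (G : SimpleGraph V) (x y z : V) : SimpleGraph (Option V) :=
  SimpleGraph.fromRel (fun a b =>
    (∃ p q, a = some p ∧ b = some q ∧ G.Adj p q) ∨
    (a = none ∧ (b = some x ∨ b = some y ∨ b = some z)))

open SimpleGraph

variable {V : Type} {G : SimpleGraph V}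

/-- First vertex of a walk lying in `s`. -/
lemma firstHit {u v : V} (w : G.Walk u v) (s : Set V) :
    v ∈ s → u ∉ s →
    ∃ (c : V) (w1 : G.Walk u c), c ∈ s ∧ (∀ b ∈ w1.support, b ∈ s → b = c) ∧
      (∀ b ∈ w1.support, b ∈ w.support) := by
  induction w with
  | nil => intro hv hu; exact absurd hv hu
  | cons h w' ih =>
    intro hv hu
    rename_i u' m v'
    by_cases hm : m ∈ s
    · refine ⟨m, Walk.cons h Walk.nil, hm, ?_, ?_⟩
      · intro b hb hbs
        simp only [Walk.support_cons, Walk.support_nil, List.mem_cons, List.mem_singleton] at hb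
        rcases hb with rfl | rfl | h
        · exact absurd hbs hu
        · rfl
        · exact absurd h (List.not_mem_nil (a := b))
      · intro b hb
        simp only [Walk.support_cons, Walk.support_nil, List.mem_cons, List.mem_singleton] at hb ⊢
        rcases hb with rfl | rfl | h
        · exact Or.inl rfl
        · exact Or.inr (by simp [Walk.start_mem_support])
        · exact absurd h (List.not_mem_nil (a := b))
    · obtain ⟨c, w1, hc, honly, hsub⟩ := ih hv hm
      refine ⟨c, Walk.cons h w1, hc, ?_, ?_⟩
      · intro b hb hbs
        rw [Walk.support_cons, List.mem_cons] at hb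
        rcases hb with rfl | hb
        · exact absurd hbs hu
        · exact honly b hb hbs
      · intro b hb
        rw [Walk.support_cons, List.mem_cons] at hb ⊢
        rcases hb with rfl | hb
        · exact Or.inl rfl
        · exact Or.inr (hsub b hb)

/-- Peel the first vertex off a path that has a vertex other than its start. -/
lemma cons_decomp {u v : V} {w : G.Walk u v} (hw : w.IsPath) {b : V} (hb : b ∈ w.support)
    (hbu : b ≠ u) :
    ∃ (e : V) (_ : G.Adj u e) (w' : G.Walk e v),
      u ∉ w'.support ∧ ∀ c, c ∈ w.support ↔ c = u ∨ c ∈ w'.support := by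
  cases w with
  | nil => simp only [Walk.support_nil, List.mem_singleton] at hb; exact absurd hb hbu
  | cons h w' =>
    rw [Walk.cons_isPath_iff] at hw
    exact ⟨_, h, w', hw.2, fun c => by simp [Walk.support_cons]⟩

/-- Split a path at a vertex; the two pieces meet only at that vertex. -/
lemma path_split {u v : V} {w : G.Walk u v} (hw : w.IsPath) {c : V} (hc : c ∈ w.support) :
    ∃ (w1 : G.Walk u c) (w2 : G.Walk c v), w1.IsPath ∧ w2.IsPath ∧
      (∀ b ∈ w1.support, b ∈ w.support) ∧ (∀ b ∈ w2.support, b ∈ w.support) ∧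
      (∀ b ∈ w1.support, b ∈ w2.support → b = c) := by
  haveI := Classical.decEq V
  refine ⟨w.takeUntil c hc, w.dropUntil c hc, hw.takeUntil hc, hw.dropUntil hc,
    fun b hb => w.support_takeUntil_subset hc hb,
    fun b hb => w.support_dropUntil_subset hc hb, ?_⟩
  intro b hb1 hb2
  have hnd := hw.support_nodup
  rw [← w.take_spec hc, Walk.support_append, List.nodup_append] at hnd
  by_contra hne
  have hb2' : b ∈ (w.dropUntil c hc).support.tail := by
    have := (w.dropUntil c hc).support_eq_cons
    rw [this, List.mem_cons] at hb2
    exact hb2.resolve_left hne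
  exact hnd.2.2 b hb1 b hb2' rfl

/-- Extract a path avoiding `v` from connectivity of `G - v`. -/
lemma exists_path_avoid (h : (G.induce ({v}ᶜ : Set V)).Connected) {a b : V}
    (ha : a ≠ v) (hb : b ≠ v) :
    ∃ w : G.Walk a b, w.IsPath ∧ v ∉ w.support := by
  haveI := Classical.decEq V
  have hr := h.preconnected ⟨a, by simp [ha]⟩ ⟨b, by simp [hb]⟩
  obtain ⟨p⟩ := hr
  let f : G.induce ({v}ᶜ : Set V) →g G := ⟨Subtype.val, fun h => h⟩
  refine ⟨(p.map f).bypass, Walk.bypass_isPath _, fun hv => ?_⟩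
  have := (p.map f).support_bypass_subset hv
  rw [Walk.support_map, List.mem_map] at this
  obtain ⟨⟨c, hc⟩, _, hcv⟩ := this
  exact hc (show c ∈ ({v} : Set V) from hcv)

/-- A rooted `K₃` minor at any three distinct vertices of a 2-connected graph. -/
lemma rootedK3 {V : Type} {G : SimpleGraph V} (h2 : TwoConnected G) {x y z : V}
    (hxy : x ≠ y) (hxz : x ≠ z) (hyz : y ≠ z) :
    ∃ Bx By Bz : Set V,
      x ∈ Bx ∧ y ∈ By ∧ z ∈ Bz ∧
      (G.induce Bx).Connected ∧ (G.induce By).Connected ∧ (G.induce Bz).Connected ∧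
      (∀ v, v ∈ Bx → v ∈ By → False) ∧ (∀ v, v ∈ Bx → v ∈ Bz → False) ∧
      (∀ v, v ∈ By → v ∈ Bz → False) ∧
      (∃ a ∈ Bx, ∃ b ∈ By, G.Adj a b) ∧ (∃ a ∈ Bx, ∃ b ∈ Bz, G.Adj a b) ∧
      (∃ a ∈ By, ∃ b ∈ Bz, G.Adj a b) := by
  haveI := Classical.decEq V
  obtain ⟨-, -, hcut⟩ := h2
  -- S : path z → y avoiding x
  obtain ⟨S, hSpath, hxS⟩ := exists_path_avoid (hcut x) hxz.symm (Ne.symm hxy)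
  -- R : path z → x avoiding y
  obtain ⟨R, hRpath, hyR⟩ := exists_path_avoid (hcut y) hyz.symm hxy
  -- a : last vertex of R on S
  obtain ⟨a, U1, haS, hU1only, hU1sub⟩ := firstHit R.reverse {v | v ∈ S.support}
    S.start_mem_support hxS
  set R2 : G.Walk a x := U1.bypass.reverse with hR2def
  have hR2path : R2.IsPath := U1.bypass_isPath.reverse
  have hR2U1 : ∀ b ∈ R2.support, b ∈ U1.support := by
    intro b hb
    rw [hR2def, Walk.support_reverse, List.mem_reverse] at hb
    exact U1.support_bypass_subset hb
  have hR2S : ∀ b ∈ R2.support, b ∈ S.support → b = a :=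
    fun b hb hbs => hU1only b (hR2U1 b hb) hbs
  have hR2R : ∀ b ∈ R2.support, b ∈ R.support := by
    intro b hb
    have := hU1sub b (hR2U1 b hb)
    rwa [Walk.support_reverse, List.mem_reverse] at this
  have hax : a ≠ x := fun h => hxS (h ▸ haS)
  have hay : a ≠ y := fun h => hyR (h ▸ hR2R a R2.start_mem_support)
  -- split S at a
  obtain ⟨S1, S2, hS1p, hS2p, hS1sub, hS2sub, hS12⟩ := path_split hSpath haS
  -- W : path x → y avoiding a
  obtain ⟨W, hWpath, haW⟩ := exists_path_avoid (hcut a) hax.symm hay.symm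
  -- q : first vertex of W on S2
  obtain ⟨q, W1, hqS2, hW1only, hW1W⟩ := firstHit W {v | v ∈ S2.support}
    S2.end_mem_support (fun h => hxS (hS2sub x h))
  have hqS : q ∈ S.support := hS2sub q hqS2
  have hqa : q ≠ a := fun h => haW (h ▸ hW1W q W1.end_mem_support)
  -- R3 : R2 minus its first vertex a
  obtain ⟨a', haa', R3, haR3, hR2iff⟩ := cons_decomp hR2path R2.end_mem_support hax.symm
  have hR3R2 : ∀ b ∈ R3.support, b ∈ R2.support := fun b hb => (hR2iff b).mpr (Or.inr hb)
  have hxR3 : x ∈ R3.support := by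
    rcases (hR2iff x).mp R2.end_mem_support with h | h
    · exact absurd h hax.symm
    · exact h
  have hR3S : ∀ b ∈ R3.support, b ∈ S.support → False :=
    fun b hb hbs => haR3 ((hR2S b (hR3R2 b hb) hbs) ▸ hb)
  -- p : last vertex of W1 in R3 ∪ S1, before q
  have hqt : q ∉ {v | v ∈ R3.support ∨ v ∈ S1.support} := by
    rintro (hq | hq)
    · exact hR3S q hq hqS
    · exact hqa (hS12 q hq hqS2)
  obtain ⟨p, V1, hpt, hV1only, hV1sub⟩ := firstHit W1.reverse
    {v | v ∈ R3.support ∨ v ∈ S1.support} (Or.inl hxR3) hqt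
  set Wb : G.Walk q p := V1.bypass with hWbdef
  have hWbp : Wb.IsPath := V1.bypass_isPath
  have hWbW1 : ∀ b ∈ Wb.support, b ∈ W1.support := by
    intro b hb
    have := hV1sub b (V1.support_bypass_subset (hWbdef ▸ hb))
    rwa [Walk.support_reverse, List.mem_reverse] at this
  have hWbonly : ∀ b ∈ Wb.support, (b ∈ R3.support ∨ b ∈ S1.support) → b = p :=
    fun b hb hbt => hV1only b (V1.support_bypass_subset (hWbdef ▸ hb)) hbt
  have hpq : p ≠ q := fun h => hqt (h ▸ hpt)
  have haWb : a ∉ Wb.support := fun h => haW (hW1W a (hWbW1 a h))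
  -- Wc : Wb minus its first vertex q
  obtain ⟨d, hqd, Wc, hqWc, hWbiff⟩ := cons_decomp hWbp Wb.end_mem_support hpq
  have hWcWb : ∀ b ∈ Wc.support, b ∈ Wb.support := fun b hb => (hWbiff b).mpr (Or.inr hb)
  have hpWc : p ∈ Wc.support := by
    rcases (hWbiff p).mp Wb.end_mem_support with h | h
    · exact absurd h hpq
    · exact h
  have hWcS2 : ∀ b ∈ Wc.support, b ∈ S2.support → False :=
    fun b hb hbs => hqWc ((hW1only b (hWbW1 b (hWcWb b hb)) hbs) ▸ hb)
  have hWconly : ∀ b ∈ Wc.support, (b ∈ R3.support ∨ b ∈ S1.support) → b = p :=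
    fun b hb hbt => hWbonly b (hWcWb b hb) hbt
  rcases hpt with hp | hp
  · -- Case 1 : p on R3
    obtain ⟨S2a, S2b, hS2ap, hS2bp, hS2asub, hS2bsub, hS2ab⟩ := path_split hS2p hqS2
    obtain ⟨d2, hqd2, Wd, hqWd, hS2ariff⟩ := cons_decomp hS2ap.reverse
      (by rw [Walk.support_reverse, List.mem_reverse]; exact S2a.start_mem_support) hqa.symm
    have hWdS2a : ∀ b ∈ Wd.support, b ∈ S2a.support := by
      intro b hb
      have : b ∈ S2a.reverse.support := (hS2ariff b).mpr (Or.inr hb)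
      rwa [Walk.support_reverse, List.mem_reverse] at this
    refine ⟨{v | v ∈ R3.support} ∪ {v | v ∈ Wc.support},
      {v | v ∈ S2b.support},
      {v | v ∈ S1.support} ∪ {v | v ∈ Wd.support},
      Or.inl hxR3, S2b.end_mem_support, Or.inl S1.start_mem_support,
      SimpleGraph.induce_union_connected R3.connected_induce_support.preconnected
        Wc.connected_induce_support.preconnected ⟨p, hp, hpWc⟩,
      S2b.connected_induce_support,
      SimpleGraph.induce_union_connected S1.connected_induce_support.preconnected
        Wd.connected_induce_support.preconnected ⟨a, S1.end_mem_support, Wd.end_mem_support⟩,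
      ?_, ?_, ?_, ?_, ?_, ?_⟩
    · rintro v (hv | hv) hv2
      · exact hR3S v hv (hS2sub v (hS2bsub v hv2))
      · exact hWcS2 v hv (hS2bsub v hv2)
    · rintro v (hv | hv) (hv2 | hv2)
      · exact hR3S v hv (hS1sub v hv2)
      · exact hR3S v hv (hS2sub v (hS2asub v (hWdS2a v hv2)))
      · have := hWconly v hv (Or.inr hv2); subst this
        exact hR3S v hp (hS1sub v hv2)
      · exact hWcS2 v hv (hS2asub v (hWdS2a v hv2))
    · rintro v hv (hv2 | hv2)
      · have := hS12 v hv2 (hS2bsub v hv); subst this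
        exact hqa (hS2ab v S2a.start_mem_support hv).symm
      · exact hqWd ((hS2ab v (hWdS2a v hv2) hv) ▸ hv2)
    · exact ⟨d, Or.inr Wc.start_mem_support, q, S2b.start_mem_support, hqd.symm⟩
    · exact ⟨a', Or.inl R3.start_mem_support, a, Or.inl S1.end_mem_support, haa'.symm⟩
    · exact ⟨q, S2b.start_mem_support, d2, Or.inr Wd.start_mem_support, hqd2⟩
  · -- Case 2 : p on S1
    have hpa : p ≠ a := fun h => haWb (h ▸ Wb.end_mem_support)
    obtain ⟨e1, hae1, S1m, haS1m, hS1riff⟩ := cons_decomp hS1p.reverse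
      (by rw [Walk.support_reverse, List.mem_reverse]; exact hp) hpa
    have hS1mS1 : ∀ b ∈ S1m.support, b ∈ S1.support := by
      intro b hb
      have : b ∈ S1.reverse.support := (hS1riff b).mpr (Or.inr hb)
      rwa [Walk.support_reverse, List.mem_reverse] at this
    have hpS1m : p ∈ S1m.support := by
      rcases (hS1riff p).mp (by rw [Walk.support_reverse, List.mem_reverse]; exact hp) with h | h
      · exact absurd h hpa
      · exact h
    obtain ⟨f, haf, S2r, haS2r, hS2iff⟩ := cons_decomp hS2p S2.end_mem_support hay.symm
    have hS2rS2 : ∀ b ∈ S2r.support, b ∈ S2.support := fun b hb => (hS2iff b).mpr (Or.inr hb)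
    have hqS2r : q ∈ S2r.support := by
      rcases (hS2iff q).mp hqS2 with h | h
      · exact absurd h hqa
      · exact h
    refine ⟨{v | v ∈ R2.support},
      {v | v ∈ S2r.support},
      {v | v ∈ S1m.support} ∪ {v | v ∈ Wc.support},
      R2.end_mem_support, S2r.end_mem_support, Or.inl S1m.end_mem_support,
      R2.connected_induce_support,
      S2r.connected_induce_support,
      SimpleGraph.induce_union_connected S1m.connected_induce_support.preconnected
        Wc.connected_induce_support.preconnected ⟨p, hpS1m, hpWc⟩,
      ?_, ?_, ?_, ?_, ?_, ?_⟩
    · intro v hv hv2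
      have := hR2S v hv (hS2sub v (hS2rS2 v hv2)); subst this
      exact haS2r hv2
    · rintro v hv (hv2 | hv2)
      · have := hR2S v hv (hS1sub v (hS1mS1 v hv2)); subst this
        exact haS1m hv2
      · rcases (hR2iff v).mp hv with h | h
        · subst h; exact haWb (hWcWb v hv2)
        · have := hWconly v hv2 (Or.inl h); subst this
          exact hR3S v h (hS1sub v hp)
    · rintro v hv (hv2 | hv2)
      · have := hS12 v (hS1mS1 v hv2) (hS2rS2 v hv); subst this
        exact haS1m hv2
      · exact hWcS2 v hv2 (hS2rS2 v hv)
    · exact ⟨a, R2.start_mem_support, f, S2r.start_mem_support, haf⟩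
    · exact ⟨a, R2.start_mem_support, e1, Or.inl S1m.start_mem_support, hae1⟩
    · exact ⟨q, hqS2r, d, Or.inr Wc.start_mem_support, hqd⟩

lemma apex_adj_some {x y z p q : V} (h : G.Adj p q) :
    (addApexVertex G x y z).Adj (some p) (some q) := by
  rw [addApexVertex, SimpleGraph.fromRel_adj]
  exact ⟨by simpa using h.ne, Or.inl (Or.inl ⟨p, q, rfl, rfl, h⟩)⟩

lemma apex_adj_none {x y z w : V} (hw : w = x ∨ w = y ∨ w = z) :
    (addApexVertex G x y z).Adj none (some w) := by
  rw [addApexVertex, SimpleGraph.fromRel_adj]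
  refine ⟨by simp, Or.inl (Or.inr ⟨rfl, ?_⟩)⟩
  rcases hw with rfl | rfl | rfl
  · exact Or.inl rfl
  · exact Or.inr (Or.inl rfl)
  · exact Or.inr (Or.inr rfl)

lemma lift_conn {x y z : V} {B : Set V} (h : (G.induce B).Connected) :
    ((addApexVertex G x y z).induce (some '' B)).Connected := by
  have hf : Function.Surjective
      (fun a : B => (⟨some a.1, ⟨a.1, a.2, rfl⟩⟩ : (some '' B : Set (Option V)))) := by
    rintro ⟨o, b, hb, rfl⟩
    exact ⟨⟨b, hb⟩, rfl⟩
  exact SimpleGraph.Connected.map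
    ⟨fun a => ⟨some a.1, ⟨a.1, a.2, rfl⟩⟩, fun hab => apex_adj_some hab⟩ hf h

/-- Adding a new vertex with three neighbors in a 2-connected graph creates a `K₄` minor. -/
theorem k4_minor_of_apex_on_two_connected {V : Type} (G : SimpleGraph V)
    (h2 : TwoConnected G) (x y z : V) (hxy : x ≠ y) (hxz : x ≠ z) (hyz : y ≠ z) :
    HasK4Minor (addApexVertex G x y z) := by
  classical
  obtain ⟨Bx, By, Bz, hxB, hyB, hzB, hcx, hcy, hcz, dxy, dxz, dyz, exy, exz, eyz⟩ :=
    rootedK3 h2 hxy hxz hyz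
  set H := addApexVertex G x y z with hH
  have hnone : (H.induce ({none} : Set (Option V))).Connected := by
    have h := (Walk.nil (G := H) (u := (none : Option V))).connected_induce_support
    have : {v : Option V | v ∈ (Walk.nil (G := H) (u := (none : Option V))).support}
        = ({none} : Set (Option V)) := by
      ext o; simp
    rwa [this] at h
  have dnone : ∀ B : Set V, Disjoint ({none} : Set (Option V)) (some '' B) := by
    intro B
    rw [Set.disjoint_left]
    rintro o ho ⟨b, _, hbo⟩
    rw [Set.mem_singleton_iff] at ho
    subst ho
    cases hbo
  have dimg : ∀ B C : Set V, (∀ v, v ∈ B → v ∈ C → False) →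
      Disjoint (some '' B : Set (Option V)) (some '' C) := by
    intro B C hBC
    rw [Set.disjoint_left]
    rintro o ⟨b, hb, rfl⟩ ⟨c, hc, hco⟩
    rw [Option.some_inj] at hco
    subst hco
    exact hBC _ hb hc
  have eimg : ∀ B C : Set V, (∃ a ∈ B, ∃ b ∈ C, G.Adj a b) →
      ∃ a ∈ (some '' B : Set (Option V)), ∃ b ∈ (some '' C : Set (Option V)), H.Adj a b := by
    rintro B C ⟨a, ha, b, hb, hab⟩
    exact ⟨some a, ⟨a, ha, rfl⟩, some b, ⟨b, hb, rfl⟩, apex_adj_some hab⟩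
  have enone : ∀ (B : Set V) (w : V), w ∈ B → (w = x ∨ w = y ∨ w = z) →
      ∃ a ∈ ({none} : Set (Option V)), ∃ b ∈ (some '' B : Set (Option V)), H.Adj a b :=
    fun B w hw hwxyz => ⟨none, rfl, some w, ⟨w, hw, rfl⟩, apex_adj_none hwxyz⟩
  refine ⟨![{none}, some '' Bx, some '' By, some '' Bz], ?_, ?_, ?_⟩
  · intro i
    fin_cases i
    · exact hnone
    · exact lift_conn hcx
    · exact lift_conn hcy
    · exact lift_conn hcz
  · intro i j hij
    fin_cases i <;> fin_cases j <;>
      first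
        | exact absurd rfl hij
        | exact dnone _
        | exact (dnone _).symm
        | exact dimg _ _ dxy
        | exact (dimg _ _ dxy).symm
        | exact dimg _ _ dxz
        | exact (dimg _ _ dxz).symm
        | exact dimg _ _ dyz
        | exact (dimg _ _ dyz).symm
  · have hsym : ∀ (s t : Set (Option V)), (∃ a ∈ s, ∃ b ∈ t, H.Adj a b) →
        ∃ a ∈ t, ∃ b ∈ s, H.Adj a b := by
      rintro s t ⟨a, ha, b, hb, hab⟩
      exact ⟨b, hb, a, ha, hab.symm⟩
    intro i j hij
    fin_cases i <;> fin_cases j <;>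
      first
        | exact absurd rfl hij
        | exact enone Bx x hxB (Or.inl rfl)
        | exact hsym _ _ (enone Bx x hxB (Or.inl rfl))
        | exact enone By y hyB (Or.inr (Or.inl rfl))
        | exact hsym _ _ (enone By y hyB (Or.inr (Or.inl rfl)))
        | exact enone Bz z hzB (Or.inr (Or.inr rfl))
        | exact hsym _ _ (enone Bz z hzB (Or.inr (Or.inr rfl)))
        | exact eimg _ _ exy
        | exact hsym _ _ (eimg _ _ exy)
        | exact eimg _ _ exz
        | exact hsym _ _ (eimg _ _ exz)
        | exact eimg _ _ eyz
        | exact hsym _ _ (eimg _ _ eyz)
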